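/- For a QPSK symbol x with each real/imaginary component uniform on {±1/√2}, observed through an AWGN channel with SNR ρ = 1/v, the per-component MMSE is 1 − ∫ φ(z) tanh(ρ + √ρ z) dz (with φ the standard normal density), and this quantity lies strictly between 0 and 1 for every ρ > 0. -/
import Mathlib

open MeasureTheory ProbabilityTheory
open scoped NNReal ENNReal

private lemma my_cont_tanh : Continuous Real.tanh := by
  have : Real.tanh = fun x => Real.sinh x / Real.cosh x := funext Real.tanh_eq_sinh_div_cosh
  rw [this]
  exact Real.continuous_sinh.div Real.continuous_cosh fun x => (Real.cosh_pos x).ne'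

private lemma my_tanh_lt_one (x : ℝ) : Real.tanh x < 1 := by
  rw [Real.tanh_eq_sinh_div_cosh, div_lt_one (Real.cosh_pos x)]
  nlinarith [Real.cosh_sub_sinh x, Real.exp_pos (-x)]

private lemma my_neg_one_lt_tanh (x : ℝ) : -1 < Real.tanh x := by
  rw [Real.tanh_eq_sinh_div_cosh, lt_div_iff₀ (Real.cosh_pos x)]
  nlinarith [Real.cosh_add_sinh x, Real.exp_pos x]

private lemma my_abs_tanh_le (x : ℝ) : |Real.tanh x| ≤ 1 := by
  rw [abs_le]
  exact ⟨(my_neg_one_lt_tanh x).le, (my_tanh_lt_one x).le⟩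

private lemma my_tanh_ne_zero {x : ℝ} (hx : x ≠ 0) : Real.tanh x ≠ 0 := by
  rw [Real.tanh_eq_sinh_div_cosh]
  exact div_ne_zero (Real.sinh_ne_zero.mpr hx) (Real.cosh_pos x).ne'

/-- Integral against the standard Gaussian as a Lebesgue integral against the pdf. -/
private lemma my_gauss_int (g : ℝ → ℝ) :
    ∫ z, g z ∂(gaussianReal 0 1) = ∫ z, gaussianPDFReal 0 1 z * g z := by
  rw [gaussianReal_of_var_ne_zero _ one_ne_zero]
  have h : gaussianPDF 0 1 = fun z => ((Real.toNNReal (gaussianPDFReal 0 1 z) : ℝ≥0) : ℝ≥0∞) := by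
    funext z; rfl
  rw [h, integral_withDensity_eq_integral_smul ((measurable_gaussianPDFReal 0 1).real_toNNReal)]
  congr 1; funext z
  simp [NNReal.smul_def, Real.coe_toNNReal _ (gaussianPDFReal_nonneg 0 1 z)]

private lemma my_pdf_even (z : ℝ) : gaussianPDFReal 0 1 (-z) = gaussianPDFReal 0 1 z := by
  simp only [gaussianPDFReal]
  norm_num

private lemma my_integrable {g : ℝ → ℝ} (hg : Measurable g) (C : ℝ) (hC : ∀ z, |g z| ≤ C) :
    Integrable (fun z => gaussianPDFReal 0 1 z * g z) := by
  refine Integrable.mono' ((integrable_gaussianPDFReal 0 1).const_mul C)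
    ((measurable_gaussianPDFReal 0 1).mul hg).aestronglyMeasurable ?_
  filter_upwards with z
  rw [Real.norm_eq_abs, abs_mul, abs_of_nonneg (gaussianPDFReal_nonneg 0 1 z), mul_comm]
  exact mul_le_mul_of_nonneg_right (hC z) (gaussianPDFReal_nonneg 0 1 z)

/-- For a QPSK symbol over AWGN with SNR `ρ = 1/v`, the per-component MMSE of the
posterior-mean (tanh) estimator equals `1 − ∫ φ(z) tanh(ρ + √ρ z) dz`, and this
quantity lies strictly between 0 and 1. -/
theorem stmt_8 (ρ : ℝ) (hρ : 0 < ρ) :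
    let M : ℝ :=
      (1 / 2) * ∫ z, (1 - Real.tanh (ρ + Real.sqrt ρ * z)) ^ 2 ∂(gaussianReal 0 1) +
      (1 / 2) * ∫ z, (-1 - Real.tanh (-ρ + Real.sqrt ρ * z)) ^ 2 ∂(gaussianReal 0 1)
    M = 1 - ∫ z : ℝ, (Real.exp (-z ^ 2 / 2) / Real.sqrt (2 * Real.pi)) *
          Real.tanh (ρ + Real.sqrt ρ * z) ∧
    0 < M ∧ M < 1 := by
  intro M
  have hs0 : 0 < Real.sqrt ρ := Real.sqrt_pos.mpr hρ
  have hs2 : Real.sqrt ρ ^ 2 = ρ := Real.sq_sqrt hρ.le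
  set s : ℝ := Real.sqrt ρ with hs
  set φ : ℝ → ℝ := gaussianPDFReal 0 1 with hφ
  have hφpos : ∀ z, 0 < φ z := fun z => gaussianPDFReal_pos 0 1 z one_ne_zero
  set t : ℝ → ℝ := fun z => Real.tanh (ρ + s * z) with ht
  have htm : Measurable t := (my_cont_tanh.comp (by continuity)).measurable
  -- pdf equals the explicit density in the statement
  have hφeq : ∀ z : ℝ, φ z = Real.exp (-z ^ 2 / 2) / Real.sqrt (2 * Real.pi) := by
    intro z
    simp only [hφ, gaussianPDFReal, NNReal.coe_one, mul_one, sub_zero]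
    ring

  -- integrability facts
  have hIt : Integrable (fun z => φ z * t z) := my_integrable htm 1 fun z => my_abs_tanh_le _
  have hIt2 : Integrable (fun z => φ z * t z ^ 2) := by
    refine my_integrable (htm.pow_const 2) 1 fun z => ?_
    rw [abs_pow, sq_abs]
    show Real.tanh (ρ + s * z) ^ 2 ≤ 1
    nlinarith [my_abs_tanh_le (ρ + s * z), abs_nonneg (Real.tanh (ρ + s * z)),
      sq_abs (Real.tanh (ρ + s * z))]
  have hIφ : Integrable φ := integrable_gaussianPDFReal 0 1
  set T : ℝ := ∫ z, φ z * t z with hT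
  -- key symmetry: ∫ φ (t - t²) = 0, hence ∫ φ t = ∫ φ t²
  have hST : T = ∫ z, φ z * t z ^ 2 := by
    set g : ℝ → ℝ := fun z => φ z * (t z - t z ^ 2) with hg
    have hpt : ∀ z : ℝ, g (-(2 * s) + -z) = -g z := by
      intro z
      have harg : ρ + s * (-(2 * s) + -z) = -(ρ + s * z) := by nlinarith
      set u := ρ + s * z with hu
      have hc : 0 < Real.cosh u := Real.cosh_pos u
      have h1 : 1 + Real.tanh u = Real.exp u / Real.cosh u := by
        rw [Real.tanh_eq_sinh_div_cosh, ← Real.cosh_add_sinh]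
        field_simp
      have h2 : 1 - Real.tanh u = Real.exp (-u) / Real.cosh u := by
        rw [Real.tanh_eq_sinh_div_cosh, ← Real.cosh_sub_sinh]
        field_simp
      have hdens : φ (-(2 * s) + -z) * Real.exp u = φ z * Real.exp (-u) := by
        simp only [hφ, gaussianPDFReal, NNReal.coe_one, mul_one, sub_zero, mul_assoc,
          ← Real.exp_add]
        congr 2
        rw [hu]
        linear_combination (-2 : ℝ) * hs2
      simp only [hg, ht, harg, Real.tanh_neg]
      have lhs_eq : φ (-(2 * s) + -z) * (-Real.tanh u - (-Real.tanh u) ^ 2)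
          = -(Real.tanh u * (φ (-(2 * s) + -z) * (1 + Real.tanh u))) := by ring
      have rhs_eq : -(φ z * (Real.tanh u - Real.tanh u ^ 2))
          = -(Real.tanh u * (φ z * (1 - Real.tanh u))) := by ring
      rw [lhs_eq, rhs_eq, h1, h2, mul_div_assoc', mul_div_assoc', hdens]
      ring
    have hsymm : (∫ z, g (-(2 * s) + -z)) = ∫ z, g z := by
      have h1 : (∫ z, g (-(2 * s) + -z)) = ∫ z, g (-(2 * s) + z) :=
        integral_neg_eq_self (fun z => g (-(2 * s) + z)) volume
      rw [h1, integral_add_left_eq_self]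
    have h0 : (∫ z, g z) = -∫ z, g z := by
      calc (∫ z, g z) = ∫ z, g (-(2 * s) + -z) := hsymm.symm
        _ = ∫ z, -g z := integral_congr_ae (Filter.Eventually.of_forall hpt)
        _ = -∫ z, g z := integral_neg _
    have hg0 : (∫ z, g z) = 0 := by linarith
    have hsplit : (∫ z, g z) = T - ∫ z, φ z * t z ^ 2 := by
      have : g = fun z => φ z * t z - φ z * t z ^ 2 := by funext z; simp only [hg]; ring
      rw [this, integral_sub hIt hIt2]
    linarith [hsplit, hg0]
  -- both Gaussian integrals equal 1 - T
  have hA : (∫ z, φ z * (1 - t z) ^ 2) = 1 - T := by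
    have hrw : (fun z => φ z * (1 - t z) ^ 2)
        = fun z => (φ z - 2 * (φ z * t z)) + φ z * t z ^ 2 := by funext z; ring
    have i2 : Integrable (fun z => 2 * (φ z * t z)) := hIt.const_mul 2
    have i1 : Integrable (fun z => φ z - 2 * (φ z * t z)) := hIφ.sub i2
    rw [hrw, integral_add i1 hIt2, integral_sub hIφ i2, integral_const_mul]
    have h1 : (∫ z, φ z) = 1 := integral_gaussianPDFReal_eq_one 0 one_ne_zero
    rw [h1, ← hT, ← hST]
    ring
  have hI1 : (∫ z, (1 - Real.tanh (ρ + s * z)) ^ 2 ∂(gaussianReal 0 1)) = 1 - T := by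
    rw [my_gauss_int]; exact hA
  have hI2 : (∫ z, (-1 - Real.tanh (-ρ + s * z)) ^ 2 ∂(gaussianReal 0 1)) = 1 - T := by
    rw [my_gauss_int]
    have hrw : (fun z => gaussianPDFReal 0 1 z * (-1 - Real.tanh (-ρ + s * z)) ^ 2)
        = fun z => (fun w => φ w * (1 - t w) ^ 2) (-z) := by
      funext z
      show gaussianPDFReal 0 1 z * (-1 - Real.tanh (-ρ + s * z)) ^ 2
          = gaussianPDFReal 0 1 (-z) * (1 - Real.tanh (ρ + s * -z)) ^ 2
      rw [my_pdf_even z, show ρ + s * -z = -(-ρ + s * z) by ring, Real.tanh_neg]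
      ring
    rw [hrw, integral_neg_eq_self (fun w => φ w * (1 - t w) ^ 2) volume]
    exact hA
  have hM : M = 1 - T := by
    show (1 / 2) * (∫ z, (1 - Real.tanh (ρ + s * z)) ^ 2 ∂(gaussianReal 0 1)) +
      (1 / 2) * (∫ z, (-1 - Real.tanh (-ρ + s * z)) ^ 2 ∂(gaussianReal 0 1)) = 1 - T
    rw [hI1, hI2]; ring
  -- T > 0
  have hTpos : 0 < T := by
    rw [hST]
    rw [integral_pos_iff_support_of_nonneg_ae
      (Filter.Eventually.of_forall fun z => mul_nonneg (hφpos z).le (sq_nonneg _)) hIt2]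
    refine lt_of_lt_of_le ?_ (measure_mono (?_ : Set.Ioi (-ρ / s) ⊆ _))
    · simp [Real.volume_Ioi]
    · intro z hz
      have hz' : -ρ / s < z := hz
      have harg : 0 < ρ + s * z := by
        have := (div_lt_iff₀ hs0).mp hz'
        nlinarith
      have htz : t z ≠ 0 := my_tanh_ne_zero harg.ne'
      simp only [Function.mem_support]
      exact mul_ne_zero (hφpos z).ne' (pow_ne_zero 2 htz)
  -- T < 1
  have hTlt : T < 1 := by
    have h1mT : 1 - T = ∫ z, φ z * (1 - t z) := by
      have hrw : (fun z => φ z * (1 - t z)) = fun z => φ z - φ z * t z := by funext z; ring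
      rw [hrw, integral_sub hIφ hIt, integral_gaussianPDFReal_eq_one 0 one_ne_zero, hT]
    have hpos : 0 < ∫ z, φ z * (1 - t z) := by
      have hint : Integrable (fun z => φ z * (1 - t z)) := by
        refine my_integrable (by fun_prop) 2 fun z => ?_
        have := my_abs_tanh_le (ρ + s * z)
        rw [abs_le] at this ⊢
        constructor <;> simp only [ht] <;> linarith [this.1, this.2]
      rw [integral_pos_iff_support_of_nonneg_ae
        (Filter.Eventually.of_forall fun z =>
          mul_nonneg (hφpos z).le (by linarith [my_tanh_lt_one (ρ + s * z)])) hint]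
      refine lt_of_lt_of_le ?_ (measure_mono (?_ : Set.Ioi (0 : ℝ) ⊆ _))
      · simp [Real.volume_Ioi]
      · intro z _
        simp only [Function.mem_support]
        have h1 : 0 < 1 - t z := by
          have := my_tanh_lt_one (ρ + s * z)
          simp only [ht]
          linarith
        exact mul_ne_zero (hφpos z).ne' h1.ne'
    linarith [h1mT ▸ hpos]
  refine ⟨?_, by linarith, by linarith⟩
  rw [hM, hT]
  refine congrArg (fun x => 1 - x) (integral_congr_ae (Filter.Eventually.of_forall fun z => ?_))
  simp only [ht, hφeq]
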